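/- Every λμ-term in normal form is typeable in the restricted intersection type system: if N is a βμ-normal form then there exist a basis Γ, a name context Δ, and a restricted arrow type κ→ψ with Γ ⊢ᴿ N : κ→ψ | Δ. -/
import Mathlib


-- Terms and commands of the untyped λμ-calculus.
mutual
inductive Trm : Type where
  | var : Nat → Trm
  | lam : Nat → Trm → Trm
  | app : Trm → Trm → Trm
  | mu  : Nat → Cm → Trm
inductive Cm : Type where
  | nam : Nat → Trm → Cm
end

-- Ordinary term substitution `T[L/x]`.
mutual
def subT : Trm → Nat → Trm → Trm
  | .var y, x, L => if y = x then L else .var y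
  | .lam y M, x, L => if y = x then .lam y M else .lam y (subT M x L)
  | .app M N, x, L => .app (subT M x L) (subT N x L)
  | .mu a C, x, L => .mu a (subC C x L)
def subC : Cm → Nat → Trm → Cm
  | .nam a M, x, L => .nam a (subT M x L)
end

-- Structural substitution `T[α ⇐ L]`.
mutual
def ssubT : Trm → Nat → Trm → Trm
  | .var y, _, _ => .var y
  | .lam y M, a, L => .lam y (ssubT M a L)
  | .app M N, a, L => .app (ssubT M a L) (ssubT N a L)
  | .mu b C, a, L => if b = a then .mu b C else .mu b (ssubC C a L)
def ssubC : Cm → Nat → Trm → Cm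
  | .nam b M, a, L =>
      if b = a then .nam b (.app (ssubT M a L) L) else .nam b (ssubT M a L)
end

-- Restricted types: term types δ ::= κ→ψ | δ∧δ ; continuation types
-- κ ::= ω | δ×κ | κ∧κ  (ψ is a single type constant, left implicit in `arr`).
mutual
inductive RTy : Type where
  | arr : RKy → RTy
  | inter : RTy → RTy → RTy
inductive RKy : Type where
  | omega : RKy
  | prod : RTy → RKy → RKy
  | inter : RKy → RKy → RKy
end

-- The restricted preorders ≤ᴿ on term and continuation types.
mutual
inductive RLeD : RTy → RTy → Prop where
  | refl : ∀ δ, RLeD δ δ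
  | trans : ∀ {δ₁ δ₂ δ₃}, RLeD δ₁ δ₂ → RLeD δ₂ δ₃ → RLeD δ₁ δ₃
  | interL : ∀ δ₁ δ₂, RLeD (.inter δ₁ δ₂) δ₁
  | interR : ∀ δ₁ δ₂, RLeD (.inter δ₁ δ₂) δ₂
  | interGlb : ∀ {δ δ₁ δ₂}, RLeD δ δ₁ → RLeD δ δ₂ → RLeD δ (.inter δ₁ δ₂)
  | arr : ∀ {κ₁ κ₂}, RLeC κ₂ κ₁ → RLeD (.arr κ₁) (.arr κ₂)
inductive RLeC : RKy → RKy → Prop where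
  | refl : ∀ κ, RLeC κ κ
  | trans : ∀ {κ₁ κ₂ κ₃}, RLeC κ₁ κ₂ → RLeC κ₂ κ₃ → RLeC κ₁ κ₃
  | interL : ∀ κ₁ κ₂, RLeC (.inter κ₁ κ₂) κ₁
  | interR : ∀ κ₁ κ₂, RLeC (.inter κ₁ κ₂) κ₂
  | interGlb : ∀ {κ κ₁ κ₂}, RLeC κ κ₁ → RLeC κ κ₂ → RLeC κ (.inter κ₁ κ₂)
  | leOmega : ∀ κ, RLeC κ .omega
  | prodDist : ∀ δ₁ κ₁ δ₂ κ₂,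
      RLeC (.inter (.prod δ₁ κ₁) (.prod δ₂ κ₂)) (.prod (.inter δ₁ δ₂) (.inter κ₁ κ₂))
  | prodMono : ∀ {δ₁ δ₂ κ₁ κ₂}, RLeD δ₁ δ₂ → RLeC κ₁ κ₂ →
      RLeC (.prod δ₁ κ₁) (.prod δ₂ κ₂)
end

-- The restricted intersection type assignment system for λμ
-- (bases Γ : Nat → Option RTy, name contexts Δ : Nat → RKy with default ω).
mutual
inductive RTyT : (Nat → Option RTy) → Trm → RTy → (Nat → RKy) → Prop where
  | ax : ∀ {Γ x δ Δ}, Γ x = some δ → RTyT Γ (.var x) δ Δ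
  | abs : ∀ {Γ x δ M κ Δ},
      RTyT (Function.update Γ x (some δ)) M (.arr κ) Δ →
      RTyT Γ (.lam x M) (.arr (.prod δ κ)) Δ
  | app : ∀ {Γ M N δ κ Δ},
      RTyT Γ M (.arr (.prod δ κ)) Δ → RTyT Γ N δ Δ →
      RTyT Γ (.app M N) (.arr κ) Δ
  | mu : ∀ {Γ a C κ κ' Δ},
      RTyC Γ C (.prod (.arr κ') κ') (Function.update Δ a κ) →
      RTyT Γ (.mu a C) (.arr κ) Δ
  | inter : ∀ {Γ M δ₁ δ₂ Δ},
      RTyT Γ M δ₁ Δ → RTyT Γ M δ₂ Δ → RTyT Γ M (.inter δ₁ δ₂) Δ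
  | sub : ∀ {Γ M δ δ' Δ}, RTyT Γ M δ Δ → RLeD δ δ' → RTyT Γ M δ' Δ
inductive RTyC : (Nat → Option RTy) → Cm → RKy → (Nat → RKy) → Prop where
  | cmd : ∀ {Γ M δ a κ Δ}, RTyT Γ M δ Δ → Δ a = κ →
      RTyC Γ (.nam a M) (.prod δ κ) Δ
  | inter : ∀ {Γ C κ₁ κ₂ Δ},
      RTyC Γ C κ₁ Δ → RTyC Γ C κ₂ Δ → RTyC Γ C (.inter κ₁ κ₂) Δ
  | sub : ∀ {Γ C κ κ' Δ}, RTyC Γ C κ Δ → RLeC κ κ' → RTyC Γ C κ' Δ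
end

-- βμ-normal forms: N ::= x N₁ ⋯ Nₖ | λx.N | μα.[β]N.
mutual
inductive NfT : Trm → Prop where
  | ne : ∀ {M}, NeT M → NfT M
  | lam : ∀ (x : Nat) {M}, NfT M → NfT (.lam x M)
  | mu : ∀ (a b : Nat) {M}, NfT M → NfT (.mu a (.nam b M))
inductive NeT : Trm → Prop where
  | var : ∀ x, NeT (.var x)
  | app : ∀ {M N}, NeT M → NfT N → NeT (.app M N)
end


/-- The fixed basis assigning `ω→ψ` to every variable. -/
@[reducible] def Γ₀ : Nat → Option RTy := fun _ => some (.arr .omega)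

def PP (M : Trm) : Prop :=
  ∃ (κ : RKy) (Θ : Nat → RKy), ∀ Δ : Nat → RKy, (∀ b, RLeC (Δ b) (Θ b)) → RTyT Γ₀ M (.arr κ) Δ

def QQ (M : Trm) : Prop :=
  ∃ Θ : Nat → RKy, ∀ (Δ : Nat → RKy) (κ : RKy),
    (∀ b, RLeC (Δ b) (Θ b)) → RTyT Γ₀ M (.arr κ) Δ

lemma upd_eq (x : Nat) : Function.update Γ₀ x (some (RTy.arr .omega)) = Γ₀ := by
  funext y
  by_cases h : y = x
  · subst h; simp
  · simp [Function.update_of_ne h]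

lemma main_nf : ∀ M, NfT M → PP M := by
  intro M h
  refine NfT.rec (motive_1 := fun M _ => PP M) (motive_2 := fun M _ => QQ M)
    ?_ ?_ ?_ ?_ ?_ h
  · -- ne
    rintro M _ ⟨Θ, hΘ⟩
    exact ⟨.omega, Θ, fun Δ hΔ => hΘ Δ .omega hΔ⟩
  · -- lam
    rintro x M _ ⟨κ, Θ, hK⟩
    refine ⟨.prod (.arr .omega) κ, Θ, fun Δ hΔ => ?_⟩
    exact RTyT.abs ((upd_eq x).symm ▸ hK Δ hΔ)
  · -- mu
    rintro a b M _ ⟨κM, Θ, hK⟩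
    by_cases hab : b = a
    · subst hab
      refine ⟨.inter (Θ b) κM, Θ, fun Δ hΔ => ?_⟩
      have hΔ' : ∀ c, RLeC (Function.update Δ b (RKy.inter (Θ b) κM) c) (Θ c) := by
        intro c
        by_cases h : c = b
        · subst h; rw [Function.update_self]; exact RLeC.interL _ _
        · rw [Function.update_of_ne h]; exact hΔ c
      have hM := hK _ hΔ'
      have hM' := RTyT.sub hM (RLeD.arr (RLeC.interR (Θ b) κM))
      exact RTyT.mu (RTyC.cmd hM' (Function.update_self _ _ _))
    · refine ⟨Θ a, fun c => .inter (Θ c) κM, fun Δ hΔ => ?_⟩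
      have hΔ' : ∀ c, RLeC (Function.update Δ a (Θ a) c) (Θ c) := by
        intro c
        by_cases h : c = a
        · subst h; rw [Function.update_self]; exact RLeC.refl _
        · rw [Function.update_of_ne h]
          exact RLeC.trans (hΔ c) (RLeC.interL _ _)
      have hM := hK _ hΔ'
      have hM' := RTyT.sub hM
        (RLeD.arr (RLeC.trans (hΔ b) (RLeC.interR (Θ b) κM)))
      exact RTyT.mu (RTyC.cmd hM' (Function.update_of_ne hab _ _))
  · -- var
    intro x
    exact ⟨fun _ => .omega, fun Δ κ _ =>
      RTyT.sub (RTyT.ax rfl) (RLeD.arr (RLeC.leOmega κ))⟩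
  · -- app
    rintro M N _ _ ⟨ΘM, hM⟩ ⟨κN, ΘN, hN⟩
    refine ⟨fun c => .inter (ΘM c) (ΘN c), fun Δ κ hΔ => ?_⟩
    exact RTyT.app
      (hM Δ (.prod (.arr κN) κ) (fun c => RLeC.trans (hΔ c) (RLeC.interL _ _)))
      (hN Δ (fun c => RLeC.trans (hΔ c) (RLeC.interR _ _)))

/-- Every λμ-term in normal form is typeable in the restricted intersection type
system with an arrow type. -/
theorem normal_forms_typeable (N : Trm) (h : NfT N) :
    ∃ (Γ : Nat → Option RTy) (Δ : Nat → RKy) (κ : RKy),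
      RTyT Γ N (.arr κ) Δ := by
  obtain ⟨κ, Θ, hK⟩ := main_nf N h
  exact ⟨Γ₀, Θ, κ, hK Θ (fun b => RLeC.refl _)⟩
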